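/- For any positive integers n and k with n ≥ k, the two-parameter quantum binomial coefficient [n choose k]_{v,t} = [n]_{v,t}!/([k]_{v,t}! [n-k]_{v,t}!), where [m]_{v,t} = ((vt)^m - (vt^{-1})^{-m})/((vt) - (vt^{-1})^{-1}), is a Laurent polynomial in v and t with integer coefficients (i.e., lies in ℤ[v^{±1}, t^{±1}]). -/

import Mathlib

/- STATEMENT 0: For positive integers n ≥ k, the two-parameter quantum binomial
coefficient [n choose k]_{v,t} lies in ℤ[v^{±1}, t^{±1}]. -/

noncomputable section

/-- The field ℚ(t). -/
abbrev FF : Type := RatFunc ℚ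
/-- The field ℚ(v,t), realized as ℚ(t)(v). -/
abbrev KK : Type := RatFunc FF
/-- The variable v in ℚ(v,t). -/
def vv : KK := RatFunc.X
/-- The variable t in ℚ(v,t). -/
def tt : KK := algebraMap FF KK RatFunc.X

/-- The two-parameter quantum integer [n]_{v,t} = ((vt)^n - (vt^{-1})^{-n})/(vt - (vt^{-1})^{-1}). -/
def qnumvt (v t : KK) (n : ℕ) : KK := ((v*t)^n - ((v*t⁻¹)⁻¹)^n)/(v*t - (v*t⁻¹)⁻¹)

/-- The two-parameter quantum factorial [n]_{v,t}! = ∏_{r=1}^n [r]_{v,t}. -/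
def qfacvt (v t : KK) (n : ℕ) : KK := ∏ r ∈ Finset.Icc 1 n, qnumvt v t r

/-- The two-parameter quantum binomial [n choose k]_{v,t}. -/
def qbinvt (v t : KK) (n k : ℕ) : KK := qfacvt v t n / (qfacvt v t k * qfacvt v t (n-k))

lemma vv_ne : vv ≠ 0 := by
  simpa [vv] using RatFunc.X_ne_zero (K := FF)

lemma tt_ne : tt ≠ 0 := by
  simp only [tt, ne_eq, map_eq_zero]
  exact RatFunc.X_ne_zero

lemma vv_pow_ne_one (r : ℕ) (hr : 0 < r) : vv ^ (2*r) ≠ 1 := by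
  intro h
  have : (RatFunc.X : KK) ^ (2*r) = algebraMap (Polynomial FF) KK 1 := by
    simpa [vv] using h
  rw [RatFunc.X, ← map_pow] at this
  have := RatFunc.algebraMap_injective (K := FF) this
  have hd := congrArg Polynomial.natDegree this
  simp [Polynomial.natDegree_X_pow] at hd
  omega

lemma qnum_ne (r : ℕ) (hr : 0 < r) : qnumvt vv tt r ≠ 0 := by
  have hv := vv_ne; have ht := tt_ne
  have hnum : (vv*tt)^r - ((vv*tt⁻¹)⁻¹)^r ≠ 0 := by
    rw [sub_ne_zero]
    intro h
    apply vv_pow_ne_one r hr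
    have : ((vv*tt)^r) * ((vv*tt⁻¹))^r = ((vv*tt⁻¹)⁻¹)^r * ((vv*tt⁻¹))^r := by
      rw [h]
    rw [inv_pow, inv_mul_cancel₀ (pow_ne_zero r (mul_ne_zero hv (inv_ne_zero ht)))] at this
    calc vv ^ (2*r) = ((vv*tt)*(vv*tt⁻¹))^r := by
          rw [mul_mul_mul_comm, mul_inv_cancel₀ ht, mul_one, ← pow_two, ← pow_mul]
      _ = 1 := by rw [mul_pow]; exact this
  have hden : vv*tt - (vv*tt⁻¹)⁻¹ ≠ 0 := by
    rw [sub_ne_zero]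
    intro h
    apply vv_pow_ne_one 1 one_pos
    have : ((vv*tt)) * ((vv*tt⁻¹)) = ((vv*tt⁻¹)⁻¹) * ((vv*tt⁻¹)) := by rw [h]
    rw [inv_mul_cancel₀ (mul_ne_zero hv (inv_ne_zero ht))] at this
    calc vv ^ (2*1) = (vv*tt)*(vv*tt⁻¹) := by field_simp
      _ = 1 := this
  exact div_ne_zero hnum hden

lemma qfac_ne (n : ℕ) : qfacvt vv tt n ≠ 0 := by
  rw [qfacvt, Finset.prod_ne_zero_iff]
  intro r hr
  exact qnum_ne r (by simp at hr; omega)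

lemma qfac_zero : qfacvt vv tt 0 = 1 := by simp [qfacvt]

lemma qfac_succ (n : ℕ) : qfacvt vv tt (n+1) = qfacvt vv tt n * qnumvt vv tt (n+1) := by
  rw [qfacvt, qfacvt, Finset.prod_Icc_succ_top (Nat.succ_le_succ (Nat.zero_le n))]

lemma qnum_add (a b : ℕ) :
    qnumvt vv tt (a+b) = vv^a * tt^a * qnumvt vv tt b + (vv⁻¹)^b * tt^b * qnumvt vv tt a := by
  have hv := vv_ne; have ht := tt_ne
  rw [qnumvt, qnumvt, qnumvt, ← mul_div_assoc, ← mul_div_assoc, ← add_div]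
  congr 1
  field_simp
  ring

lemma qbin_self (n : ℕ) : qbinvt vv tt n n = 1 := by
  rw [qbinvt, Nat.sub_self, qfac_zero, mul_one, div_self (qfac_ne n)]

lemma qbin_zero (n : ℕ) : qbinvt vv tt n 0 = 1 := by
  rw [qbinvt, Nat.sub_zero, qfac_zero, one_mul, div_self (qfac_ne n)]

lemma qbin_pascal (j l : ℕ) :
    qbinvt vv tt (j+l+2) (j+1) =
      vv^(j+1) * tt^(j+1) * qbinvt vv tt (j+l+1) (j+1)
      + (vv⁻¹)^(l+1) * tt^(l+1) * qbinvt vv tt (j+l+1) j := by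
  have h := qnum_add (j+1) (l+1)
  rw [show (j+1)+(l+1) = j+l+1+1 by ring] at h
  have e1 : j+l+2-(j+1) = l+1 := by omega
  have e2 : j+l+1-(j+1) = l := by omega
  have e3 : j+l+1-j = l+1 := by omega
  rw [qbinvt, qbinvt, qbinvt, e1, e2, e3,
    show j+l+2 = j+l+1+1 from rfl, qfac_succ (j+l+1), qfac_succ j, qfac_succ l, h]
  have n1 := qfac_ne j
  have n2 := qfac_ne l
  have n3 := qfac_ne (j+l+1)
  have n4 := qnum_ne (j+1) (by omega)
  have n5 := qnum_ne (l+1) (by omega)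
  rw [← mul_div_assoc, ← mul_div_assoc,
    div_add_div _ _ (mul_ne_zero (mul_ne_zero n1 n4) n2) (mul_ne_zero n1 (mul_ne_zero n2 n5)),
    div_eq_div_iff (mul_ne_zero (mul_ne_zero n1 n4) (mul_ne_zero n2 n5))
      (mul_ne_zero (mul_ne_zero (mul_ne_zero n1 n4) n2) (mul_ne_zero n1 (mul_ne_zero n2 n5)))]
  ring

/-- For positive integers n ≥ k, the two-parameter quantum binomial coefficient is a
Laurent polynomial in v and t with integer coefficients. -/
theorem qbinvt_mem_laurent : ∀ n k : ℕ, 0 < n → 0 < k → k ≤ n →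
    qbinvt vv tt n k ∈ Algebra.adjoin ℤ ({vv, vv⁻¹, tt, tt⁻¹} : Set KK) := by
  set A := Algebra.adjoin ℤ ({vv, vv⁻¹, tt, tt⁻¹} : Set KK) with hA
  have hvm : vv ∈ A := Algebra.subset_adjoin (by simp)
  have hvim : vv⁻¹ ∈ A := Algebra.subset_adjoin (by simp)
  have htm : tt ∈ A := Algebra.subset_adjoin (by simp)
  intro n
  induction n with
  | zero => intro k h; omega
  | succ m ih =>
    intro k hk hk0 hkn
    by_cases hkm : k = m + 1
    · subst hkm; rw [qbin_self]; exact one_mem A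
    · have hkle : k ≤ m := by omega
      obtain ⟨j, rfl⟩ : ∃ j, k = j + 1 := ⟨k - 1, by omega⟩
      obtain ⟨l, hl⟩ : ∃ l, m + 1 = j + l + 2 := ⟨m - j - 1, by omega⟩
      have hm : m = j + l + 1 := by omega
      rw [hl, qbin_pascal]
      have h1 : qbinvt vv tt (j + l + 1) (j + 1) ∈ A :=
        hm ▸ ih (j + 1) (by omega) (by omega) (by omega)
      have h2 : qbinvt vv tt (j + l + 1) j ∈ A := by
        rcases Nat.eq_zero_or_pos j with hj | hj
        · subst hj; rw [qbin_zero]; exact one_mem A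
        · exact hm ▸ ih j (by omega) hj (by omega)
      exact add_mem (mul_mem (mul_mem (pow_mem hvm _) (pow_mem htm _)) h1)
        (mul_mem (mul_mem (pow_mem hvim _) (pow_mem htm _)) h2)
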